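/- In any n-player Shapley cost sharing game with submodular cost functions, if P is a pure Nash equilibrium and Q is any strategy vector, then for every player i, C_i(P) ≤ Σ_{r ∈ Q_i} C^r({i}); that is, at equilibrium each player's private cost is at most the stand-alone cost of any of her alternative strategies. -/
import Mathlib


open Finset

def preSet {N : Type*} [DecidableEq N] (S : Finset N)
    (π : {x // x ∈ S} ≃ Fin S.card) (i : {x // x ∈ S}) : Finset N :=
  (S.attach.filter (fun j => π j < π i)).image Subtype.val

noncomputable def shapley {N : Type*} [DecidableEq N]
    (C : Finset N → ℝ) (S : Finset N) (i : N) : ℝ :=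
  if hi : i ∈ S then
    (1 / (Nat.factorial S.card : ℝ)) *
      ∑ π : {x // x ∈ S} ≃ Fin S.card,
        (C (preSet S π ⟨i, hi⟩ ∪ {i}) - C (preSet S π ⟨i, hi⟩))
  else 0

/-- `users P r = P^r = {i : r ∈ P_i}`, the set of players using resource `r`. -/
def users {n : ℕ} {R : Type*} [DecidableEq R]
    (P : Fin n → Finset R) (r : R) : Finset (Fin n) :=
  Finset.univ.filter (fun i => r ∈ P i)

/-- The private cost of player `i` under Shapley cost sharing:
`C_i(P) = Σ_{r ∈ P_i} φ_i(C^r, P^r)`. -/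
noncomputable def privCost {n : ℕ} {R : Type*} [DecidableEq R]
    (Cr : R → Finset (Fin n) → ℝ) (P : Fin n → Finset R) (i : Fin n) : ℝ :=
  ∑ r ∈ P i, shapley (Cr r) (users P r) i

/-- The social cost `C(P) = Σ_{r ∈ R} C^r(P^r)`. -/
noncomputable def socCost {n : ℕ} {R : Type*} [Fintype R] [DecidableEq R]
    (Cr : R → Finset (Fin n) → ℝ) (P : Fin n → Finset R) : ℝ :=
  ∑ r : R, Cr r (users P r)

/-- The Shapley potential
`Φ(P) = Σ_{r ∈ R} Σ_{∅ ≠ T ⊆ P^r} ((|P^r|-|T|)!(|T|-1)!/|P^r|!) · C^r(T)`. -/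
noncomputable def pot {n : ℕ} {R : Type*} [Fintype R] [DecidableEq R]
    (Cr : R → Finset (Fin n) → ℝ) (P : Fin n → Finset R) : ℝ :=
  ∑ r : R, ∑ T ∈ (users P r).powerset.filter (fun T => T.Nonempty),
    ((Nat.factorial ((users P r).card - T.card) : ℝ) *
        (Nat.factorial (T.card - 1) : ℝ) / (Nat.factorial (users P r).card : ℝ)) *
      Cr r T

/-- `P` is a pure Nash equilibrium of the Shapley cost sharing game. -/
def isPNE {n : ℕ} {R : Type*} [DecidableEq R]
    (Strat : Fin n → Set (Finset R)) (Cr : R → Finset (Fin n) → ℝ)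
    (P : Fin n → Finset R) : Prop :=
  (∀ i, P i ∈ Strat i) ∧
    ∀ i, ∀ Q ∈ Strat i, privCost Cr P i ≤ privCost Cr (Function.update P i Q) i

/-- `H_k`, the `k`-th harmonicNum number. -/
noncomputable def harmonicNum (k : ℕ) : ℝ := ∑ l ∈ Finset.Icc 1 k, (1 / (l : ℝ))

lemma shapley_le_singleton {N : Type*} [DecidableEq N]
    (C : Finset N → ℝ) (hC0 : C ∅ = 0) (hnn : ∀ T, 0 ≤ C T)
    (hsub : ∀ (X Y : Finset N) (i : N), X ⊆ Y → i ∉ Y →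
      C (insert i Y) - C Y ≤ C (insert i X) - C X)
    (S : Finset N) (i : N) : shapley C S i ≤ C {i} := by
  unfold shapley
  split
  · rename_i hi
    have hcard : Fintype.card ({x // x ∈ S} ≃ Fin S.card) = Nat.factorial S.card := by
      have e : {x // x ∈ S} ≃ Fin S.card := Fintype.equivFinOfCardEq (Fintype.card_coe S)
      rw [Fintype.card_equiv e, Fintype.card_coe]
    have hfac : (0:ℝ) < (Nat.factorial S.card : ℝ) := by
      exact_mod_cast Nat.factorial_pos _
    have hbound : ∀ π : {x // x ∈ S} ≃ Fin S.card,
        C (preSet S π ⟨i, hi⟩ ∪ {i}) - C (preSet S π ⟨i, hi⟩) ≤ C {i} := by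
      intro π
      have hnotin : i ∉ preSet S π ⟨i, hi⟩ := by
        intro h
        simp only [preSet, Finset.mem_image, Finset.mem_filter] at h
        obtain ⟨j, ⟨_, hlt⟩, hj⟩ := h
        have : j = ⟨i, hi⟩ := Subtype.ext hj
        subst this
        exact lt_irrefl _ hlt
      have := hsub ∅ (preSet S π ⟨i, hi⟩) i (Finset.empty_subset _) hnotin
      rw [hC0] at this
      calc C (preSet S π ⟨i, hi⟩ ∪ {i}) - C (preSet S π ⟨i, hi⟩)
          = C (insert i (preSet S π ⟨i, hi⟩)) - C (preSet S π ⟨i, hi⟩) := by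
            rw [Finset.union_comm, ← Finset.insert_eq]
        _ ≤ C (insert i ∅) - 0 := by linarith
        _ = C {i} := by simp
    calc (1 / (Nat.factorial S.card : ℝ)) *
        ∑ π : {x // x ∈ S} ≃ Fin S.card,
          (C (preSet S π ⟨i, hi⟩ ∪ {i}) - C (preSet S π ⟨i, hi⟩))
        ≤ (1 / (Nat.factorial S.card : ℝ)) *
            ∑ _π : {x // x ∈ S} ≃ Fin S.card, C {i} := by
          apply mul_le_mul_of_nonneg_left
          · exact Finset.sum_le_sum fun π _ => hbound π
          · positivity
      _ = C {i} := by
          rw [Finset.sum_const, Finset.card_univ, hcard, nsmul_eq_mul]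
          field_simp
  · exact hnn _

/-- In equilibrium of a Shapley cost sharing game with submodular costs, each
player's private cost is at most the stand-alone cost of any alternative
strategy. -/
theorem privCost_le_standalone_of_submodular {n : ℕ} {R : Type*} [Fintype R] [DecidableEq R]
    (Strat : Fin n → Set (Finset R)) (Cr : R → Finset (Fin n) → ℝ)
    (hC0 : ∀ r, Cr r ∅ = 0)
    (hnn : ∀ r T, 0 ≤ Cr r T)
    (hmono : ∀ r (T U : Finset (Fin n)), T ⊆ U → Cr r T ≤ Cr r U)
    (hsub : ∀ r (X Y : Finset (Fin n)) (i : Fin n), X ⊆ Y → i ∉ Y →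
      Cr r (insert i Y) - Cr r Y ≤ Cr r (insert i X) - Cr r X)
    (P : Fin n → Finset R) (hP : isPNE Strat Cr P)
    (Q : Fin n → Finset R) (hQ : ∀ i, Q i ∈ Strat i)
    (i : Fin n) :
    privCost Cr P i ≤ ∑ r ∈ Q i, Cr r {i} := by
  have h1 := hP.2 i (Q i) (hQ i)
  refine h1.trans ?_
  unfold privCost
  rw [Function.update_self]
  apply Finset.sum_le_sum
  intro r _
  exact shapley_le_singleton (Cr r) (hC0 r) (hnn r) (hsub r) _ i
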